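/- Let n ≥ 2 be an integer, 0 ≤ μ ≤ 1, and j ≥ 1 an integer. Then 1 - n·(1 - ((n-1)/n)·μ)^j + (n-1)·(1-μ)^j ≥ 0, with equality when j = 1. -/

import Mathlib

theorem link_prob_nonneg (n : ℕ) (hn : 2 ≤ n) (μ : ℝ) (hμ0 : 0 ≤ μ) (hμ1 : μ ≤ 1)
    (j : ℕ) (hj : 1 ≤ j) :
    0 ≤ 1 - (n : ℝ) * (1 - ((n : ℝ) - 1) / n * μ) ^ j + ((n : ℝ) - 1) * (1 - μ) ^ j ∧
    (j = 1 → 1 - (n : ℝ) * (1 - ((n : ℝ) - 1) / n * μ) ^ j + ((n : ℝ) - 1) * (1 - μ) ^ j = 0) := by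
  have hnR : (2:ℝ) ≤ n := by exact_mod_cast hn
  have hn0 : (0:ℝ) < n := by linarith
  constructor
  · have hb : (0:ℝ) ≤ ((n:ℝ)-1)/n := by apply div_nonneg <;> linarith
    have hsum : 1/(n:ℝ) + ((n:ℝ)-1)/n = 1 := by field_simp; ring
    have hc := (convexOn_pow j).2 (Set.mem_Ici.mpr zero_le_one)
      (Set.mem_Ici.mpr (by linarith : (0:ℝ) ≤ 1 - μ))
      (by positivity : (0:ℝ) ≤ 1/n) hb hsum
    simp only [smul_eq_mul, one_pow, mul_one] at hc
    have h1 : 1/(n:ℝ) + ((n:ℝ)-1)/n * (1-μ) = 1 - ((n:ℝ)-1)/n * μ := by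
      field_simp; ring
    rw [h1] at hc
    have h2 := mul_le_mul_of_nonneg_left hc hn0.le
    have h3 : (n:ℝ) * (1/n + ((n:ℝ)-1)/n * (1-μ)^j) = 1 + ((n:ℝ)-1) * (1-μ)^j := by
      field_simp
    linarith [h3 ▸ h2]
  · intro h
    subst h
    simp only [pow_one]
    field_simp
    ring
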